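/- Let n ≥ 1, let g₁, g₂ ∈ ℂⁿ with g₁ ≠ 0, let P > 0, and let φ be a real number with 0 ≤ φ ≤ P·‖g₁‖². Consider the feasible set F = {Q : Q an n×n complex positive semidefinite matrix, g₁ᴴQg₁ = φ, Re(Tr Q) ≤ P}. Then F is nonempty, and there exists Q* ∈ F that maximizes the objective Q ↦ g₂ᴴQg₂ over F and satisfies rank(Q*) ≤ 1. (This is the paper's rank-one optimality claim for the lower-boundary problem (15): beamforming is optimal for attaining the lower boundary of the suspicious-links rate region.) -/

import Mathlib

open Matrix
open scoped ComplexOrder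

noncomputable section

local notation "⟪" x ", " y "⟫" => (inner ℂ x y : ℂ)

def toE {n : ℕ} (x : Fin n → ℂ) : EuclideanSpace ℂ (Fin n) := WithLp.toLp 2 x

variable {n : ℕ}

lemma toE_inner (x y : Fin n → ℂ) : ⟪toE x, toE y⟫ = star x ⬝ᵥ y := by
  simp [toE, PiLp.inner_apply, dotProduct, RCLike.inner_apply, mul_comm]

lemma toE_norm_sq (x : Fin n → ℂ) : ‖toE x‖ ^ 2 = (star x ⬝ᵥ x).re := by
  rw [← inner_self_eq_norm_sq (𝕜 := ℂ), toE_inner]; rfl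

lemma toE_eq_zero {x : Fin n → ℂ} : toE x = 0 ↔ x = 0 := by simp [toE]

lemma toE_norm_sq_sum (y : Fin n → ℂ) : ‖toE y‖ ^ 2 = ∑ k, ‖y k‖ ^ 2 := by
  rw [EuclideanSpace.norm_eq, Real.sq_sqrt (by positivity)]; rfl

lemma re_star_mul (z : ℂ) : ((star z : ℂ) * z).re = ‖z‖ ^ 2 := by
  have h1 : (star z : ℂ) * z = ((Complex.normSq z : ℝ) : ℂ) :=
    (Complex.normSq_eq_conj_mul_self (z := z)).symm
  rw [h1, Complex.ofReal_re, ← Complex.sq_norm]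

lemma bessel2 {E : Type*} [NormedAddCommGroup E] [InnerProductSpace ℂ E]
    (e u x : E) (he : ‖e‖ = 1) (hu : ‖u‖ = 1 ∨ u = 0)
    (heu : (inner ℂ e u : ℂ) = 0) :
    ‖(inner ℂ e x : ℂ)‖ ^ 2 + ‖(inner ℂ u x : ℂ)‖ ^ 2 ≤ ‖x‖ ^ 2 := by
  rcases hu with hu | rfl
  · have heu' : (inner ℂ u e : ℂ) = 0 := inner_eq_zero_symm.mp heu
    have hv : Orthonormal ℂ (![e, u]) := by
      rw [orthonormal_iff_ite]
      intro i j
      fin_cases i <;> fin_cases j <;>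
        norm_num [inner_self_eq_norm_sq_to_K, he, hu, heu, heu']
    have := hv.sum_inner_products_le (s := Finset.univ) x
    simpa [Fin.sum_univ_two] using this
  · have h1 : ‖(inner ℂ e x : ℂ)‖ ≤ ‖x‖ := by
      simpa [he] using norm_inner_le_norm (𝕜 := ℂ) e x
    simpa using pow_le_pow_left₀ (norm_nonneg _) h1 2

lemma quad_form_factor (B : Matrix (Fin n) (Fin n) ℂ) (x : Fin n → ℂ) :
    star x ⬝ᵥ (Bᴴ * B).mulVec x = star (B.mulVec x) ⬝ᵥ (B.mulVec x) := by
  rw [← mulVec_mulVec, dotProduct_mulVec, vecMul_conjTranspose, star_star]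

lemma trace_eq_sum_rows (B : Matrix (Fin n) (Fin n) ℂ) :
    (Bᴴ * B).trace = ∑ k, star (B k) ⬝ᵥ (B k) := by
  rw [Matrix.trace]
  simp only [Matrix.diag, Matrix.mul_apply, Matrix.conjTranspose_apply, dotProduct,
    Pi.star_apply]
  rw [Finset.sum_comm]

lemma vecMulVec_mulVec' (w x : Fin n → ℂ) :
    (vecMulVec w (star w)).mulVec x = (star w ⬝ᵥ x) • w := by
  ext i
  simp [Matrix.mulVec, vecMulVec_apply, dotProduct, Finset.mul_sum, Pi.smul_apply,
    smul_eq_mul, mul_comm, mul_assoc, mul_left_comm]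

lemma star_dot_conj (w x : Fin n → ℂ) : star x ⬝ᵥ w = star (star w ⬝ᵥ x) := by
  simp only [dotProduct, star_sum]
  refine Finset.sum_congr rfl fun i _ => ?_
  simp [mul_comm]

lemma rank_vmv_le_one (w : Fin n → ℂ) : (vecMulVec w (star w)).rank ≤ 1 := by
  classical
  by_cases hw : w = 0
  · have hz : vecMulVec (0 : Fin n → ℂ) (star (0 : Fin n → ℂ)) = 0 := by
      ext i j; simp [vecMulVec_apply]
    rw [hw, hz, Matrix.rank_zero]
    norm_num
  · rw [Matrix.rank]
    have hr : LinearMap.range (vecMulVec w (star w)).mulVecLin ≤ Submodule.span ℂ {w} := by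
      rintro y ⟨x, rfl⟩
      rw [Matrix.mulVecLin_apply, vecMulVec_mulVec']
      exact Submodule.smul_mem _ _ (Submodule.mem_span_singleton_self w)
    calc Module.finrank ℂ (LinearMap.range (vecMulVec w (star w)).mulVecLin)
        ≤ Module.finrank ℂ (Submodule.span ℂ {w}) := Submodule.finrank_mono hr
      _ = 1 := finrank_span_singleton hw

lemma trace_vmv (w : Fin n → ℂ) : (vecMulVec w (star w)).trace = star w ⬝ᵥ w := by
  simp [Matrix.trace, Matrix.diag, vecMulVec_apply, dotProduct, mul_comm]

lemma quad_vmv (w x : Fin n → ℂ) :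
    star x ⬝ᵥ (vecMulVec w (star w)).mulVec x = star (star w ⬝ᵥ x) * (star w ⬝ᵥ x) := by
  rw [vecMulVec_mulVec', dotProduct_smul, smul_eq_mul, star_dot_conj, mul_comm, star_star]

lemma posSemidef_vmv (w : Fin n → ℂ) : (vecMulVec w (star w)).PosSemidef := by
  rw [posSemidef_iff_dotProduct_mulVec]
  constructor
  · ext i j
    simp [Matrix.conjTranspose_apply, vecMulVec_apply, mul_comm]
  · intro x
    rw [quad_vmv]
    exact star_mul_self_nonneg _

lemma dot_star_star (y z : Fin n → ℂ) : star y ⬝ᵥ star z = star (z ⬝ᵥ y) := by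
  simp only [dotProduct, star_sum]
  refine Finset.sum_congr rfl fun i _ => ?_
  simp [mul_comm]

/-- Rank-one optimality for the lower-boundary problem (15) of the paper: the feasible set
is nonempty and admits a rank-at-most-one maximizer of the jamming power at receiver 2. -/
theorem stmt2 (n : ℕ) (hn : 1 ≤ n) (g₁ g₂ : Fin n → ℂ) (hg₁ : g₁ ≠ 0)
    (P φ : ℝ) (hP : 0 < P) (hφ0 : 0 ≤ φ) (hφ : φ ≤ P * (star g₁ ⬝ᵥ g₁).re) :
    (∃ Q : Matrix (Fin n) (Fin n) ℂ,
        Q.PosSemidef ∧ (star g₁ ⬝ᵥ Q.mulVec g₁).re = φ ∧ Q.trace.re ≤ P) ∧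
    ∃ Qs : Matrix (Fin n) (Fin n) ℂ,
      (Qs.PosSemidef ∧ (star g₁ ⬝ᵥ Qs.mulVec g₁).re = φ ∧ Qs.trace.re ≤ P) ∧
      (∀ Q : Matrix (Fin n) (Fin n) ℂ,
        Q.PosSemidef → (star g₁ ⬝ᵥ Q.mulVec g₁).re = φ → Q.trace.re ≤ P →
          (star g₂ ⬝ᵥ Q.mulVec g₂).re ≤ (star g₂ ⬝ᵥ Qs.mulVec g₂).re) ∧
      Qs.rank ≤ 1 := by
  classical
  have hg1E : toE g₁ ≠ 0 := fun hz => hg₁ (toE_eq_zero.mp hz)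
  set s : ℝ := ‖toE g₁‖ with hs_def
  have hs : 0 < s := norm_pos_iff.mpr hg1E
  have hsC : ((s : ℝ) : ℂ) ≠ 0 := by exact_mod_cast hs.ne'
  have hs2 : (star g₁ ⬝ᵥ g₁).re = s ^ 2 := (toE_norm_sq g₁).symm
  have hs2pos : 0 < s ^ 2 := by positivity
  set a : ℝ := φ / s ^ 2 with ha_def
  have ha0 : 0 ≤ a := div_nonneg hφ0 hs2pos.le
  have haP : a ≤ P := by
    rw [ha_def, div_le_iff₀ hs2pos]
    rw [hs2] at hφ; linarith
  set b : ℝ := P - a with hb_def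
  have hb0 : 0 ≤ b := sub_nonneg.mpr haP
  have has2 : a * s ^ 2 = φ := div_mul_cancel₀ _ hs2pos.ne'
  -- the unit vector along g₁
  set e : Fin n → ℂ := ((s : ℂ))⁻¹ • g₁ with he_def
  have he_smul : toE e = ((s : ℂ))⁻¹ • toE g₁ := rfl
  have he_inner : ∀ y : Fin n → ℂ, ⟪toE e, toE y⟫ = (s : ℂ)⁻¹ * ⟪toE g₁, toE y⟫ := by
    intro y
    rw [he_smul, inner_smul_left, map_inv₀, Complex.conj_ofReal]
  have he1 : ‖toE e‖ = 1 := by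
    rw [he_smul, norm_smul]
    simp [hs.ne', abs_of_nonneg hs.le, ← hs_def]
  have hg1_self : ⟪toE g₁, toE g₁⟫ = ((s : ℂ)) ^ 2 := by
    rw [inner_self_eq_norm_sq_to_K]; norm_num; rfl
  -- decomposition of g₂
  set γ : ℂ := ⟪toE g₁, toE g₂⟫ / ((s : ℂ)) ^ 2 with hγ_def
  set h : Fin n → ℂ := g₂ - γ • g₁ with hh_def
  have hg2_dec : g₂ = γ • g₁ + h := by rw [hh_def]; abel
  have h_orth : ⟪toE g₁, toE h⟫ = 0 := by
    have hE : toE h = toE g₂ - γ • toE g₁ := rfl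
    rw [hE, inner_sub_right, inner_smul_right, hg1_self, hγ_def,
      div_mul_cancel₀ _ (pow_ne_zero 2 hsC), sub_self]
  set β : ℝ := ‖toE h‖ with hβ_def
  have hβ0 : 0 ≤ β := norm_nonneg _
  set u : Fin n → ℂ := ((β : ℂ))⁻¹ • h with hu_def
  have hu_smul : toE u = ((β : ℂ))⁻¹ • toE h := rfl
  have hβu : h = (β : ℂ) • u := by
    by_cases hβz : β = 0
    · have hh0 : h = 0 := toE_eq_zero.mp (norm_eq_zero.mp hβz)
      rw [hβz, hh0]; simp
    · rw [hu_def, smul_smul, mul_inv_cancel₀ (by exact_mod_cast hβz), one_smul]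
  have hβuE : toE h = (β : ℂ) • toE u := by rw [hβu]; rfl
  have hu_norm : ‖toE u‖ = 1 ∨ toE u = 0 := by
    by_cases hβz : β = 0
    · right
      have hh0 : h = 0 := toE_eq_zero.mp (norm_eq_zero.mp hβz)
      rw [hu_def, hh0]; simp; rfl
    · left
      rw [hu_smul, norm_smul, ← hβ_def]
      have : ‖((β : ℂ))⁻¹‖ = β⁻¹ := by
        simp [abs_of_nonneg hβ0]
      rw [this, inv_mul_cancel₀ hβz]
  have heu : ⟪toE e, toE u⟫ = 0 := by
    rw [hu_smul, inner_smul_right, he_inner h, h_orth]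
    ring
  have hg1u : ⟪toE g₁, toE u⟫ = 0 := by
    rw [hu_smul, inner_smul_right, h_orth, mul_zero]
  have hug1 : ⟪toE u, toE g₁⟫ = 0 := inner_eq_zero_symm.mp hg1u
  have hg2E : toE g₂ = γ • toE g₁ + (β : ℂ) • toE u := by
    rw [show toE g₂ = γ • toE g₁ + toE h from congrArg toE hg2_dec, hβuE]
  have hug2 : ⟪toE u, toE g₂⟫ = (β : ℂ) := by
    rw [hg2E, inner_add_right, inner_smul_right, hug1, mul_zero, zero_add,
      inner_smul_right, inner_self_eq_norm_sq_to_K]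
    rcases hu_norm with hu1 | hu0
    · rw [hu1]; norm_num
    · have hβz : β = 0 := by
        have := hβuE
        rw [hu0, smul_zero] at this
        simpa [hβ_def] using norm_eq_zero.mpr this
      rw [hu0, hβz]
      simp
  set α : ℂ := ⟪toE e, toE g₂⟫ with hα_def
  have hαγ : α = γ * (s : ℂ) := by
    rw [hα_def, he_inner g₂, hγ_def]
    field_simp
  have hαn : ‖α‖ = ‖γ‖ * s := by
    rw [hαγ, norm_mul]
    simp [abs_of_nonneg hs.le]
  set sa : ℝ := Real.sqrt a with hsa_def
  set sb : ℝ := Real.sqrt b with hsb_def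
  have hsa0 : 0 ≤ sa := Real.sqrt_nonneg a
  have hsb0 : 0 ≤ sb := Real.sqrt_nonneg b
  have hsa2 : sa ^ 2 = a := Real.sq_sqrt ha0
  have hsb2 : sb ^ 2 = b := Real.sq_sqrt hb0
  set θ : ℂ := if α = 0 then 1 else α / (‖α‖ : ℂ) with hθ_def
  have hθ1 : ‖θ‖ = 1 := by
    rw [hθ_def]
    split_ifs with hz
    · simp
    · rw [norm_div]
      simp only [Complex.norm_real, Real.norm_eq_abs, abs_of_nonneg (norm_nonneg α)]
      exact div_self (norm_ne_zero_iff.mpr hz)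
  have hθα : (starRingEnd ℂ) θ * α = (‖α‖ : ℂ) := by
    rw [hθ_def]
    split_ifs with hz
    · simp [hz]
    · have hαne : (‖α‖ : ℂ) ≠ 0 := by
        exact_mod_cast norm_ne_zero_iff.mpr hz
      rw [map_div₀, Complex.conj_ofReal, div_mul_eq_mul_div,
        show (starRingEnd ℂ) α * α = ((‖α‖ ^ 2 : ℝ) : ℂ) by
          rw [← Complex.normSq_eq_conj_mul_self, ← Complex.sq_norm]]
      rw [show ((‖α‖ ^ 2 : ℝ) : ℂ) = (‖α‖ : ℂ) * (‖α‖ : ℂ) by push_cast; ring,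
        mul_div_assoc, div_self hαne, mul_one]
  -- the beamforming vector
  set w : Fin n → ℂ := ((sa : ℂ) * θ) • e + ((sb : ℂ)) • u with hw_def
  have hwE : toE w = ((sa : ℂ) * θ) • toE e + ((sb : ℂ)) • toE u := rfl
  have hw_inner : ∀ y : Fin n → ℂ, ⟪toE w, toE y⟫ =
      (sa : ℂ) * (starRingEnd ℂ) θ * ⟪toE e, toE y⟫ + (sb : ℂ) * ⟪toE u, toE y⟫ := by
    intro y
    rw [hwE, inner_add_left, inner_smul_left, inner_smul_left, _root_.map_mul, Complex.conj_ofReal,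
      Complex.conj_ofReal]
  have heg1 : ⟪toE e, toE g₁⟫ = (s : ℂ) := by
    rw [he_inner g₁, hg1_self]
    field_simp
  have hwg1 : ⟪toE w, toE g₁⟫ = (sa : ℂ) * (starRingEnd ℂ) θ * (s : ℂ) := by
    rw [hw_inner g₁, heg1, hug1, mul_zero, add_zero]
  have hwg1n : ‖⟪toE w, toE g₁⟫‖ ^ 2 = φ := by
    rw [hwg1, norm_mul, norm_mul, RCLike.norm_conj, hθ1]
    simp only [Complex.norm_real, Real.norm_eq_abs, abs_of_nonneg hsa0, abs_of_nonneg hs.le,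
      mul_one]
    rw [mul_pow, hsa2, has2]
  set M₀ : ℝ := sa * ‖α‖ + sb * β with hM0_def
  have hM00 : 0 ≤ M₀ := by positivity
  have hwg2 : ⟪toE w, toE g₂⟫ = (M₀ : ℂ) := by
    rw [hw_inner g₂, ← hα_def, hug2, mul_assoc, hθα, hM0_def]
    push_cast
    ring
  have hwg2n : ‖⟪toE w, toE g₂⟫‖ ^ 2 = M₀ ^ 2 := by
    rw [hwg2]
    simp [abs_of_nonneg hM00]
  have hwnorm : ‖toE w‖ ^ 2 ≤ P := by
    rw [hwE, norm_add_sq (𝕜 := ℂ)]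
    have hcross : ⟪((sa : ℂ) * θ) • toE e, ((sb : ℂ)) • toE u⟫ = 0 := by
      rw [inner_smul_left, inner_smul_right, heu]
      ring
    rw [hcross]
    simp only [map_zero, mul_zero, add_zero]
    rw [norm_smul, norm_smul, mul_pow, mul_pow, norm_mul]
    have h1 : ‖(sa : ℂ)‖ = sa := by simp [abs_of_nonneg hsa0]
    have h2 : ‖(sb : ℂ)‖ = sb := by simp [abs_of_nonneg hsb0]
    rw [h1, h2, hθ1, he1, mul_one, one_pow, mul_one, hsa2, hsb2]
    have hu2 : ‖toE u‖ ^ 2 ≤ 1 := by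
      rcases hu_norm with h' | h' <;> simp [h']
    have hbu : b * ‖toE u‖ ^ 2 ≤ b * 1 := mul_le_mul_of_nonneg_left hu2 hb0
    have h1n : ‖(1 : ℝ)‖ = 1 := by norm_num
    linarith
  -- the optimal rank-one matrix
  set Qs : Matrix (Fin n) (Fin n) ℂ := vecMulVec w (star w) with hQs_def
  have hquad : ∀ x : Fin n → ℂ, (star x ⬝ᵥ Qs.mulVec x).re = ‖⟪toE w, toE x⟫‖ ^ 2 := by
    intro x
    rw [hQs_def, quad_vmv, re_star_mul, toE_inner]
  have feas : Qs.PosSemidef ∧ (star g₁ ⬝ᵥ Qs.mulVec g₁).re = φ ∧ Qs.trace.re ≤ P := by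
    refine ⟨posSemidef_vmv w, ?_, ?_⟩
    · rw [hquad g₁, hwg1n]
    · rw [hQs_def, trace_vmv]
      rw [← toE_norm_sq]
      exact hwnorm
  refine ⟨⟨Qs, feas⟩, Qs, feas, ?_, rank_vmv_le_one w⟩
  -- optimality
  intro Q hQ h1 h2
  obtain ⟨B, rfl⟩ : ∃ B : Matrix (Fin n) (Fin n) ℂ, Q = Bᴴ * B := by
    open scoped MatrixOrder in
    obtain ⟨B, rfl⟩ := CStarAlgebra.nonneg_iff_eq_star_mul_self.mp hQ.nonneg
    exact ⟨B, rfl⟩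
  have hqf : ∀ x : Fin n → ℂ, (star x ⬝ᵥ (Bᴴ * B).mulVec x).re = ‖toE (B.mulVec x)‖ ^ 2 := by
    intro x
    rw [quad_form_factor, ← toE_norm_sq]
  have hφB : ‖toE (B.mulVec g₁)‖ ^ 2 = φ := by rw [← hqf g₁, h1]
  have htr : (Bᴴ * B).trace.re = ∑ k, ‖toE (B k)‖ ^ 2 := by
    rw [trace_eq_sum_rows, Complex.re_sum]
    exact Finset.sum_congr rfl fun k _ => (toE_norm_sq (B k)).symm
  have key : ∀ (y : Fin n → ℂ) (k : Fin n),
      ‖(B.mulVec y) k‖ = ‖⟪toE y, toE (star (B k))⟫‖ := by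
    intro y k
    rw [toE_inner, dot_star_star]
    rw [show (B.mulVec y) k = B k ⬝ᵥ y from rfl]
    exact (norm_star _).symm
  have hstar_norm : ∀ k, ‖toE (star (B k))‖ ^ 2 = ‖toE (B k)‖ ^ 2 := by
    intro k
    rw [toE_norm_sq_sum, toE_norm_sq_sum]
    exact Finset.sum_congr rfl fun i _ => by simp
  have besselk : ∀ k, ‖(B.mulVec e) k‖ ^ 2 + ‖(B.mulVec u) k‖ ^ 2 ≤ ‖toE (B k)‖ ^ 2 := by
    intro k
    have hb := bessel2 (toE e) (toE u) (toE (star (B k))) he1 hu_norm heu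
    rw [key e k, key u k, ← hstar_norm k]
    exact hb
  have hEU : ‖toE (B.mulVec e)‖ ^ 2 + ‖toE (B.mulVec u)‖ ^ 2 ≤ (Bᴴ * B).trace.re := by
    rw [toE_norm_sq_sum, toE_norm_sq_sum, htr, ← Finset.sum_add_distrib]
    exact Finset.sum_le_sum fun k _ => besselk k
  have hBe : ‖toE (B.mulVec e)‖ ^ 2 = a := by
    have hEsm : toE (B.mulVec e) = ((s : ℂ))⁻¹ • toE (B.mulVec g₁) := by
      rw [he_def, Matrix.mulVec_smul]; rfl
    rw [hEsm, norm_smul, mul_pow, hφB]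
    have : ‖((s : ℂ))⁻¹‖ = s⁻¹ := by simp [abs_of_nonneg hs.le]
    rw [this, ha_def]
    field_simp
  have hBu2 : ‖toE (B.mulVec u)‖ ^ 2 ≤ b := by
    rw [hb_def]
    have := le_trans hEU h2
    linarith [hBe]
  have hBg1 : ‖toE (B.mulVec g₁)‖ = sa * s := by
    have h1' : ‖toE (B.mulVec g₁)‖ = Real.sqrt φ := by
      rw [← hφB, Real.sqrt_sq (norm_nonneg _)]
    rw [h1', ← has2, Real.sqrt_mul ha0, Real.sqrt_sq hs.le]
  have hBu : ‖toE (B.mulVec u)‖ ≤ sb := by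
    have h1' : ‖toE (B.mulVec u)‖ = Real.sqrt (‖toE (B.mulVec u)‖ ^ 2) :=
      (Real.sqrt_sq (norm_nonneg _)).symm
    rw [h1', hsb_def]
    exact Real.sqrt_le_sqrt hBu2
  have hdec : toE (B.mulVec g₂) = γ • toE (B.mulVec g₁) + (β : ℂ) • toE (B.mulVec u) := by
    have hg2' : g₂ = γ • g₁ + (β : ℂ) • u := by rw [hg2_dec, hβu]
    rw [hg2', Matrix.mulVec_add, Matrix.mulVec_smul, Matrix.mulVec_smul]
    rfl
  have hfinal : ‖toE (B.mulVec g₂)‖ ≤ M₀ := by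
    rw [hdec]
    calc ‖γ • toE (B.mulVec g₁) + (β : ℂ) • toE (B.mulVec u)‖
        ≤ ‖γ • toE (B.mulVec g₁)‖ + ‖(β : ℂ) • toE (B.mulVec u)‖ := norm_add_le _ _
      _ = ‖γ‖ * (sa * s) + β * ‖toE (B.mulVec u)‖ := by
          rw [norm_smul, norm_smul, hBg1]
          simp [abs_of_nonneg hβ0]
      _ ≤ ‖γ‖ * (sa * s) + β * sb := by
          have := mul_le_mul_of_nonneg_left hBu hβ0
          linarith
      _ = M₀ := by rw [hM0_def, hαn]; ring
  rw [hqf g₂, hquad g₂, hwg2n]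
  exact pow_le_pow_left₀ (norm_nonneg _) hfinal 2
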